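/- Let R be a ring and V a cochain complex of R-modules equipped with a decreasing filtration by subcomplexes V = F₀V ⊇ F₁V ⊇ F₂V ⊇ ⋯ which is Hausdorff (⋂_i F_iV = 0). Assume that for each i ≥ 0 the quotient complex Gr_iV = F_iV/F_{i+1}V is K-injective, that for each i the inclusion F_{i+1}V ⊆ F_iV splits in every degree, i.e. F_iV ≅ F_{i+1}V ⊕ Gr_iV as graded R-modules, and that for every k ∈ ℤ there are only finitely many i with Gr_i^kV ≠ 0. Then V is K-injective. -/

import Mathlib

open CategoryTheory Limits

/-- A cochain complex of `R`-modules is K-injective if every morphism from an acyclic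
complex to it is homotopic to zero. -/
def KInjective {R : Type*} [Ring R] (P : CochainComplex (ModuleCat R) ℤ) : Prop :=
  ∀ Z : CochainComplex (ModuleCat R) ℤ, (∀ i : ℤ, Z.ExactAt i) →
    ∀ f : Z ⟶ P, Nonempty (Homotopy f 0)

lemma exists_desc_of_eval {R : Type*} [Ring R]
    {A B : CochainComplex (ModuleCat R) ℤ} (φ : A ⟶ B) (k : ℤ)
    {W : ModuleCat R} (q : B.X k ⟶ W) (hq : φ.f k ≫ q = 0) :
    ∃ σ : (cokernel φ).X k ⟶ W, (cokernel.π φ).f k ≫ σ = q := by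
  let G := HomologicalComplex.eval (ModuleCat R) (ComplexShape.up ℤ) k
  have : IsIso (cokernelComparison φ G) :=
    inferInstanceAs (IsIso (cokernelComparison φ (HomologicalComplex.eval (ModuleCat R) (ComplexShape.up ℤ) k)))
  refine ⟨@inv _ _ _ _ (cokernelComparison φ G) this ≫ cokernel.desc (G.map φ) q (by exact hq), ?_⟩
  have h1 : G.map (cokernel.π φ) ≫ @inv _ _ _ _ (cokernelComparison φ G) this = cokernel.π (G.map φ) := by
    rw [← π_comp_cokernelComparison φ G, Category.assoc, IsIso.hom_inv_id, Category.comp_id]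
  show G.map (cokernel.π φ) ≫ _ = q
  erw [← Category.assoc, h1, cokernel.π_desc]

lemma step_lemma {R : Type*} [Ring R]
    {Z : CochainComplex (ModuleCat R) ℤ} (hZ : ∀ i : ℤ, Z.ExactAt i)
    {A B : CochainComplex (ModuleCat R) ℤ} (φ : A ⟶ B)
    (hK : KInjective (cokernel φ))
    (hsplit : ∀ k : ℤ, ∃ r : B.X k ⟶ A.X k, φ.f k ≫ r = 𝟙 (A.X k))
    (g : Z ⟶ B) :
    ∃ (s : ∀ a b, Z.X a ⟶ B.X b) (g' : Z ⟶ A),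
      (∀ a b, ¬ (ComplexShape.up ℤ).Rel b a → s a b = 0) ∧
      (∀ a b, IsZero ((cokernel φ).X b) → s a b = 0) ∧
      (∀ k, g'.f k ≫ φ.f k = g.f k - (dNext k s + prevD k s)) := by
  choose r hr using hsplit
  set π := cokernel.π φ with hπ
  have hφπ : ∀ k, φ.f k ≫ π.f k = 0 := by
    intro k
    have := cokernel.condition φ
    calc φ.f k ≫ π.f k = (φ ≫ π).f k := rfl
    _ = 0 := by rw [this]; rfl
  have hσ0 : ∀ k, ∃ σ : (cokernel φ).X k ⟶ B.X k,
      π.f k ≫ σ = 𝟙 (B.X k) - r k ≫ φ.f k := by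
    intro k
    refine exists_desc_of_eval φ k _ ?_
    rw [Preadditive.comp_sub, Category.comp_id, ← Category.assoc, hr, Category.id_comp, sub_self]
  choose σ hσ using hσ0
  have hrφ : ∀ k, r k ≫ φ.f k = 𝟙 (B.X k) - π.f k ≫ σ k := by
    intro k; rw [hσ k, sub_sub_cancel]
  have hσπ : ∀ k, σ k ≫ π.f k = 𝟙 ((cokernel φ).X k) := by
    intro k
    haveI : Epi (π.f k) := inferInstance
    rw [← cancel_epi (π.f k), ← Category.assoc, hσ k, Preadditive.sub_comp,
      Category.id_comp, Category.assoc, hφπ k, comp_zero, sub_zero, Category.comp_id]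
  obtain ⟨H⟩ := hK Z hZ (g ≫ π)
  set s : ∀ a b, Z.X a ⟶ B.X b := fun a b => H.hom a b ≫ σ b with hs
  have hsπ : ∀ a b, s a b ≫ π.f b = H.hom a b := by
    intro a b
    rw [hs]
    dsimp only
    rw [Category.assoc, hσπ b, Category.comp_id]
  set u : Z ⟶ B := g - Homotopy.nullHomotopicMap s with hu
  have huf : ∀ k, u.f k = g.f k - (dNext k s + prevD k s) := by
    intro k; simp [hu, Homotopy.nullHomotopicMap]
  have hdnext : ∀ (t : ∀ a b, Z.X a ⟶ B.X b) k, dNext k t ≫ π.f k = dNext k (fun a b => t a b ≫ π.f b) := by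
    intro t k
    have w : (ComplexShape.up ℤ).Rel k (k+1) := by simp
    rw [dNext_eq t w, dNext_eq _ w, Category.assoc]
  have hprev : ∀ (t : ∀ a b, Z.X a ⟶ B.X b) k, prevD k t ≫ π.f k = prevD k (fun a b => t a b ≫ π.f b) := by
    intro t k
    have w : (ComplexShape.up ℤ).Rel (k-1) k := by simp
    rw [prevD_eq t w, prevD_eq _ w, Category.assoc, ← π.comm (k-1) k] at *
    rw [← Category.assoc]
  have hsπ' : (fun a b => s a b ≫ π.f b) = H.hom := by
    funext a b; exact hsπ a b
  have huπ : ∀ k, u.f k ≫ π.f k = 0 := by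
    intro k
    have hc := H.comm k
    rw [HomologicalComplex.comp_f, HomologicalComplex.zero_f, add_zero] at hc
    rw [huf k, Preadditive.sub_comp, Preadditive.add_comp, hdnext, hprev, hsπ', hc, sub_self]
  have key : ∀ k, (u.f k ≫ r k) ≫ φ.f k = u.f k := by
    intro k
    rw [Category.assoc, hrφ k, Preadditive.comp_sub, Category.comp_id, ← Category.assoc,
      huπ k, zero_comp, sub_zero]
  refine ⟨s, { f := fun k => u.f k ≫ r k, comm' := ?_ }, ?_, ?_, ?_⟩
  · rintro k k' (rfl : k + 1 = k')
    haveI : IsSplitMono (φ.f (k+1)) := IsSplitMono.mk' ⟨r (k+1), hr (k+1)⟩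
    rw [← cancel_mono (φ.f (k+1)), Category.assoc, Category.assoc, ← φ.comm k (k+1),
      ← Category.assoc, ← Category.assoc, key k, Category.assoc, key (k+1), u.comm k (k+1)]
  · intro a b h
    rw [hs]; dsimp only
    rw [H.zero a b h, zero_comp]
  · intro a b h
    rw [hs]; dsimp only
    rw [h.eq_of_tgt (H.hom a b) 0, zero_comp]
  · intro k
    exact (key k).trans (huf k)

lemma dNext_comp {R : Type*} [Ring R] {Z B V : CochainComplex (ModuleCat R) ℤ}
    (t : ∀ a b, Z.X a ⟶ B.X b) (e : B ⟶ V) (k : ℤ) :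
    dNext k t ≫ e.f k = dNext k (fun a b => t a b ≫ e.f b) := by
  have w : (ComplexShape.up ℤ).Rel k (k+1) := by simp
  rw [dNext_eq t w, dNext_eq _ w, Category.assoc]

lemma prevD_comp {R : Type*} [Ring R] {Z B V : CochainComplex (ModuleCat R) ℤ}
    (t : ∀ a b, Z.X a ⟶ B.X b) (e : B ⟶ V) (k : ℤ) :
    prevD k t ≫ e.f k = prevD k (fun a b => t a b ≫ e.f b) := by
  have w : (ComplexShape.up ℤ).Rel (k-1) k := by simp
  rw [prevD_eq t w, prevD_eq _ w, Category.assoc, ← e.comm (k-1) k, ← Category.assoc]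


/-- Proposition 1.3': a cochain complex with a Hausdorff decreasing filtration
`V = F₀V ⊇ F₁V ⊇ ⋯` by subcomplexes, which splits degreewise, whose graded pieces
`Gr_iV = F_iV/F_{i+1}V` are K-injective, and such that for every degree `k` only finitely
many graded pieces are nonzero in degree `k`, is itself K-injective. -/
theorem K_injective_of_filtration {R : Type*} [Ring R]
    (V : CochainComplex (ModuleCat R) ℤ)
    -- the filtration, given as a decreasing chain of subcomplexes of `V`:
    (F : ℕ → CochainComplex (ModuleCat R) ℤ)
    (ι : ∀ i : ℕ, F (i + 1) ⟶ F i)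
    (j : ∀ i : ℕ, F i ⟶ V)
    (hcomm : ∀ i : ℕ, ι i ≫ j i = j (i + 1))
    (hmono : ∀ i : ℕ, Mono (j i))
    -- `F₀V = V`:
    (htop : IsIso (j 0))
    -- the filtration is Hausdorff:
    (hHausdorff : ∀ k : ℤ, (⨅ i : ℕ, LinearMap.range ((j i).f k).hom) = ⊥)
    -- the inclusions split in every degree (as graded modules `F_iV ≅ F_{i+1}V ⊕ Gr_iV`):
    (hsplit : ∀ (i : ℕ) (k : ℤ), ∃ r : (F i).X k ⟶ (F (i + 1)).X k, (ι i).f k ≫ r = 𝟙 ((F (i + 1)).X k))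
    -- the graded pieces `Gr_iV = F_iV / F_{i+1}V` are K-injective:
    (hGr : ∀ i : ℕ, KInjective (cokernel (ι i)))
    -- in each degree `k`, only finitely many graded pieces are nonzero:
    (hfin : ∀ k : ℤ, {i : ℕ | ¬ IsZero ((cokernel (ι i)).X k)}.Finite) :
    KInjective V := by
  intro Z hZ f
  haveI := htop
  have hstep : ∀ (n : ℕ) (g : Z ⟶ F n), ∃ (s : ∀ a b, Z.X a ⟶ (F n).X b) (g' : Z ⟶ F (n+1)),
      (∀ a b, ¬ (ComplexShape.up ℤ).Rel b a → s a b = 0) ∧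
      (∀ a b, IsZero ((cokernel (ι n)).X b) → s a b = 0) ∧
      (∀ k, g'.f k ≫ (ι n).f k = g.f k - (dNext k s + prevD k s)) :=
    fun n g => step_lemma hZ (ι n) (hGr n) (hsplit n) g
  choose s' g' hP1 hP2 hP3 using hstep
  let g : ∀ n, Z ⟶ F n := fun n => Nat.rec (f ≫ inv (j 0)) (fun n gn => g' n gn) n
  have hgsucc : ∀ n, g (n+1) = g' n (g n) := fun n => rfl
  set s : ℕ → ∀ a b, Z.X a ⟶ V.X b := fun n a b => s' n (g n) a b ≫ (j n).f b with hsdef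
  have hz1 : ∀ n a b, ¬ (ComplexShape.up ℤ).Rel b a → s n a b = 0 := by
    intro n a b h
    rw [hsdef]; dsimp only
    rw [hP1 n (g n) a b h, zero_comp]
  have hz2 : ∀ n a b, IsZero ((cokernel (ι n)).X b) → s n a b = 0 := by
    intro n a b h
    rw [hsdef]; dsimp only
    rw [hP2 n (g n) a b h, zero_comp]
  have hνe : ∀ k : ℤ, ∃ N : ℕ, ∀ i, N ≤ i → IsZero ((cokernel (ι i)).X k) := by
    intro k
    obtain ⟨N, hN⟩ := (hfin k).bddAbove
    refine ⟨N + 1, fun i hi => ?_⟩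
    by_contra h
    exact absurd (hN h) (by omega)
  choose ν hν using hνe
  set hom : ∀ a b, Z.X a ⟶ V.X b := fun a b => ∑ i ∈ Finset.range (ν b), s i a b with hhom
  -- the successive differences
  have hφsucc : ∀ n k, (g (n+1) ≫ j (n+1)).f k
      = (g n ≫ j n).f k - (dNext k (s n) + prevD k (s n)) := by
    intro n k
    rw [HomologicalComplex.comp_f, ← hcomm n, HomologicalComplex.comp_f, ← Category.assoc,
      hgsucc n, hP3 n (g n) k, Preadditive.sub_comp, Preadditive.add_comp,
      dNext_comp _ (j n) k, prevD_comp _ (j n) k, HomologicalComplex.comp_f]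
  have hB : ∀ n k, (g n ≫ j n).f k
      = f.f k - ∑ i ∈ Finset.range n, (dNext k (s i) + prevD k (s i)) := by
    intro n
    induction n with
    | zero =>
      intro k
      show ((f ≫ inv (j 0)) ≫ j 0).f k = _
      rw [Category.assoc, IsIso.inv_hom_id, Category.comp_id]
      simp
    | succ n ih =>
      intro k
      rw [hφsucc n k, ih k, Finset.sum_range_succ, sub_sub]
  have hsv : ∀ n a b, ν b ≤ n → s n a b = 0 := fun n a b h => hz2 n a b (hν b n h)
  have wk : ∀ k : ℤ, (ComplexShape.up ℤ).Rel k (k+1) := fun k => by simp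
  have wk' : ∀ k : ℤ, (ComplexShape.up ℤ).Rel (k-1) k := fun k => by simp
  have hdsum : ∀ k, dNext k hom = ∑ i ∈ Finset.range (ν k), dNext k (s i) := by
    intro k
    rw [dNext_eq hom (wk k), hhom]
    dsimp only
    rw [Preadditive.comp_sum]
    exact Finset.sum_congr rfl fun i _ => (dNext_eq (s i) (wk k)).symm
  have hpsum : ∀ k, prevD k hom = ∑ i ∈ Finset.range (ν (k-1)), prevD k (s i) := by
    intro k
    rw [prevD_eq hom (wk' k), hhom]
    dsimp only
    rw [Preadditive.sum_comp]
    exact Finset.sum_congr rfl fun i _ => (prevD_eq (s i) (wk' k)).symm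
  have hdz : ∀ k i, ν k ≤ i → dNext k (s i) = 0 := by
    intro k i h
    rw [dNext_eq (s i) (wk k), hsv i (k+1) k h, comp_zero]
  have hpz : ∀ k i, ν (k-1) ≤ i → prevD k (s i) = 0 := by
    intro k i h
    rw [prevD_eq (s i) (wk' k), hsv i k (k-1) h, zero_comp]
  have hsum : ∀ (n : ℕ) k, ν k ≤ n → ν (k-1) ≤ n →
      ∑ i ∈ Finset.range n, (dNext k (s i) + prevD k (s i)) = dNext k hom + prevD k hom := by
    intro n k h1 h2
    rw [Finset.sum_add_distrib, hdsum k, hpsum k]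
    congr 1
    · exact (Finset.sum_subset (Finset.range_subset_range.2 h1)
        (fun i _ hi => hdz k i (le_of_not_gt (by simpa using hi)))).symm
    · exact (Finset.sum_subset (Finset.range_subset_range.2 h2)
        (fun i _ hi => hpz k i (le_of_not_gt (by simpa using hi)))).symm
  have hfac : ∀ m n : ℕ, m ≤ n → ∃ e : F n ⟶ F m, e ≫ j m = j n := by
    intro m n h
    induction n, h using Nat.le_induction with
    | base => exact ⟨𝟙 _, Category.id_comp _⟩
    | succ n hn ih =>
      obtain ⟨e, he⟩ := ih
      exact ⟨ι n ≫ e, by rw [Category.assoc, he, hcomm n]⟩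
  refine ⟨{ hom := hom, zero := fun a b h => ?_, comm := fun k => ?_ }⟩
  · exact Finset.sum_eq_zero fun i _ => hz1 i a b h
  · rw [HomologicalComplex.zero_f, add_zero]
    have key : ∀ m : ℕ, ∃ n : ℕ, m ≤ n ∧
        f.f k - (dNext k hom + prevD k hom) = (g n ≫ j n).f k := by
      intro m
      refine ⟨max m (max (ν k) (ν (k-1))), le_max_left _ _, ?_⟩
      rw [hB _ k, hsum _ k (le_trans (le_max_left _ _) (le_max_right _ _))
        (le_trans (le_max_right _ _) (le_max_right _ _))]
    have hzero : f.f k - (dNext k hom + prevD k hom) = 0 := by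
      apply ModuleCat.hom_ext
      apply LinearMap.ext
      intro x
      have hmem : ∀ m : ℕ,
          (f.f k - (dNext k hom + prevD k hom)) x ∈ LinearMap.range ((j m).f k).hom := by
        intro m
        obtain ⟨n, hmn, hw⟩ := key m
        obtain ⟨e, he⟩ := hfac m n hmn
        rw [hw]
        refine ⟨e.f k ((g n).f k x), ?_⟩
        have h2 : (g n ≫ j n).f k = ((g n).f k ≫ e.f k) ≫ (j m).f k := by
          rw [HomologicalComplex.comp_f, ← he, HomologicalComplex.comp_f, Category.assoc]
        rw [h2]
        rfl
      have hbot : (f.f k - (dNext k hom + prevD k hom)) x ∈ (⊥ : Submodule R (V.X k)) := by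
        rw [← hHausdorff k]
        exact Submodule.mem_iInf _ |>.2 hmem
      simpa using hbot
    exact (sub_eq_zero.mp hzero)
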